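/- Let f : ℝⁿ → ℝ be twice continuously differentiable with L₂-Lipschitz Hessian, let x ∈ ℝⁿ, g = ∇f(x), H = ∇²f(x), and T(s) = f(x) + gᵀs + (1/2)sᵀHs. Let σ > 0, r > 0, C_up > 0, η₁ ∈ (0,1), and let s ∈ ℝⁿ, s ≠ 0, satisfy T(0) − T(s) ≥ (1/2)σr‖s‖² and ‖s‖ ≤ C_up r. If σ ≥ L₂C_up/(3(1 − η₁)), then f(x) − f(x+s) ≥ η₁ (T(0) − T(s)), i.e. the iteration is successful. -/

import Mathlib

open RealInnerProductSpace
set_option maxHeartbeats 800000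
set_option synthInstance.maxHeartbeats 400000

theorem grad_taylor {n : ℕ} (f : EuclideanSpace ℝ (Fin n) → ℝ) (L₂ : ℝ) (hL₂ : 0 < L₂)
    (hf : ContDiff ℝ 2 f)
    (hLip : ∀ y z : EuclideanSpace ℝ (Fin n),
      ‖fderiv ℝ (gradient f) y - fderiv ℝ (gradient f) z‖ ≤ L₂ * ‖y - z‖)
    (x u : EuclideanSpace ℝ (Fin n)) :
    ‖gradient f (x + u) - gradient f x - fderiv ℝ (gradient f) x u‖ ≤ L₂ / 2 * ‖u‖ ^ 2 := by
  set g := gradient f with hg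
  have hg1 : ContDiff ℝ 1 g := by
    have h1 : ContDiff ℝ 1 (fderiv ℝ f) := hf.fderiv_right (by norm_num)
    exact (InnerProductSpace.toDual ℝ (EuclideanSpace ℝ (Fin n))).symm.contDiff.comp h1
  have hgdiff : Differentiable ℝ g := hg1.differentiable (by norm_num)
  have hcontD : Continuous (fun z => fderiv ℝ g z) := by
    apply continuous_iff_continuousAt.2
    intro z
    apply continuousAt_of_locally_lipschitz (by norm_num : (0:ℝ) < 1) L₂
    intro y _
    simpa [dist_eq_norm] using hLip y z
  set G : ℝ → EuclideanSpace ℝ (Fin n) :=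
    fun τ => g (x + τ • u) - τ • (fderiv ℝ g x u) with hG
  have hγ : ∀ τ : ℝ, HasDerivAt (fun τ : ℝ => x + τ • u) u τ := by
    intro τ
    simpa using ((hasDerivAt_id τ).smul_const u).const_add x
  have hG' : ∀ τ : ℝ, HasDerivAt G (fderiv ℝ g (x + τ • u) u - fderiv ℝ g x u) τ := by
    intro τ
    apply HasDerivAt.sub
    · exact ((hgdiff (x + τ • u)).hasFDerivAt.comp_hasDerivAt τ (hγ τ))
    · simpa using (hasDerivAt_id τ).smul_const (fderiv ℝ g x u)
  have hcont : Continuous (fun τ : ℝ => fderiv ℝ g (x + τ • u) u - fderiv ℝ g x u) := by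
    apply Continuous.sub _ continuous_const
    exact (hcontD.comp (by continuity)).clm_apply continuous_const
  have hint : IntervalIntegrable (fun τ : ℝ => fderiv ℝ g (x + τ • u) u - fderiv ℝ g x u)
      MeasureTheory.volume 0 1 := hcont.intervalIntegrable 0 1
  have hftc : ∫ τ in (0:ℝ)..1, (fderiv ℝ g (x + τ • u) u - fderiv ℝ g x u) = G 1 - G 0 :=
    intervalIntegral.integral_eq_sub_of_hasDerivAt (fun τ _ => hG' τ) hint
  have hGval : G 1 - G 0 = g (x + u) - g x - fderiv ℝ g x u := by
    simp [hG]
    abel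
  have hbound : ∀ τ ∈ Set.uIoc (0:ℝ) 1,
      ‖fderiv ℝ g (x + τ • u) u - fderiv ℝ g x u‖ ≤ L₂ * ‖u‖ ^ 2 * τ := by
    intro τ hτ
    rw [Set.uIoc_of_le (by norm_num : (0:ℝ) ≤ 1)] at hτ
    have hτ0 : 0 ≤ τ := le_of_lt hτ.1
    have h1 : ‖fderiv ℝ g (x + τ • u) - fderiv ℝ g x‖ ≤ L₂ * (τ * ‖u‖) := by
      have := hLip (x + τ • u) x
      simpa [norm_smul, abs_of_nonneg hτ0] using this
    calc ‖fderiv ℝ g (x + τ • u) u - fderiv ℝ g x u‖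
        = ‖(fderiv ℝ g (x + τ • u) - fderiv ℝ g x) u‖ := by simp
      _ ≤ ‖fderiv ℝ g (x + τ • u) - fderiv ℝ g x‖ * ‖u‖ :=
          ContinuousLinearMap.le_opNorm _ _
      _ ≤ L₂ * (τ * ‖u‖) * ‖u‖ := mul_le_mul_of_nonneg_right h1 (norm_nonneg u)
      _ = L₂ * ‖u‖ ^ 2 * τ := by ring
  have hintg : IntervalIntegrable (fun τ : ℝ => L₂ * ‖u‖ ^ 2 * τ) MeasureTheory.volume 0 1 :=
    (Continuous.intervalIntegrable (by continuity) 0 1)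
  have hnorm : ‖∫ τ in (0:ℝ)..1, (fderiv ℝ g (x + τ • u) u - fderiv ℝ g x u)‖
      ≤ |∫ τ in (0:ℝ)..1, L₂ * ‖u‖ ^ 2 * τ| := by
    apply intervalIntegral.norm_integral_le_abs_of_norm_le _ hintg
    filter_upwards [MeasureTheory.ae_restrict_mem measurableSet_uIoc] with τ hτ
    exact hbound τ hτ
  have hval : (∫ τ in (0:ℝ)..1, L₂ * ‖u‖ ^ 2 * τ) = L₂ / 2 * ‖u‖ ^ 2 := by
    rw [intervalIntegral.integral_const_mul, integral_id]
    ring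
  rw [hftc, hGval] at hnorm
  rw [hval] at hnorm
  calc ‖g (x + u) - g x - fderiv ℝ g x u‖ ≤ |L₂ / 2 * ‖u‖ ^ 2| := hnorm
    _ = L₂ / 2 * ‖u‖ ^ 2 := abs_of_nonneg (by positivity)

theorem fun_taylor {n : ℕ} (f : EuclideanSpace ℝ (Fin n) → ℝ) (L₂ : ℝ) (hL₂ : 0 < L₂)
    (hf : ContDiff ℝ 2 f)
    (hLip : ∀ y z : EuclideanSpace ℝ (Fin n),
      ‖fderiv ℝ (gradient f) y - fderiv ℝ (gradient f) z‖ ≤ L₂ * ‖y - z‖)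
    (x s : EuclideanSpace ℝ (Fin n)) :
    |f (x + s) - (f x + ⟪gradient f x, s⟫ + (1/2) * ⟪s, fderiv ℝ (gradient f) x s⟫)|
      ≤ L₂ / 6 * ‖s‖ ^ 3 := by
  set g := gradient f with hg
  have hg1 : ContDiff ℝ 1 g := by
    have h1 : ContDiff ℝ 1 (fderiv ℝ f) := hf.fderiv_right (by norm_num)
    exact (InnerProductSpace.toDual ℝ (EuclideanSpace ℝ (Fin n))).symm.contDiff.comp h1
  have hfd : Differentiable ℝ f := hf.differentiable (by norm_num)
  set ψ : ℝ → ℝ := fun t => f (x + t • s) - t * ⟪g x, s⟫ - (t ^ 2 / 2) * ⟪s, fderiv ℝ g x s⟫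
    with hψ
  have hγ : ∀ t : ℝ, HasDerivAt (fun t : ℝ => x + t • s) s t := by
    intro t
    simpa using ((hasDerivAt_id t).smul_const s).const_add x
  set D : ℝ → ℝ := fun t => ⟪g (x + t • s) - g x - t • (fderiv ℝ g x s), s⟫ with hD
  have hψ' : ∀ t : ℝ, HasDerivAt ψ (D t) t := by
    intro t
    have h1 : HasDerivAt (fun t : ℝ => f (x + t • s)) ⟪g (x + t • s), s⟫ t := by
      have hgr : HasGradientAt f (g (x + t • s)) (x + t • s) :=
        (hfd (x + t • s)).hasGradientAt
      have := hgr.hasFDerivAt.comp_hasDerivAt t (hγ t)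
      exact this
    have h2 : HasDerivAt (fun t : ℝ => t * ⟪g x, s⟫) ⟪g x, s⟫ t := by
      simpa using (hasDerivAt_id t).mul_const (⟪g x, s⟫ : ℝ)
    have h3 : HasDerivAt (fun t : ℝ => (t ^ 2 / 2) * ⟪s, fderiv ℝ g x s⟫)
        (t * ⟪s, fderiv ℝ g x s⟫) t := by
      have : HasDerivAt (fun t : ℝ => t ^ 2 / 2) t t := by
        simpa using ((hasDerivAt_pow 2 t).div_const 2)
      simpa using this.mul_const (⟪s, fderiv ℝ g x s⟫ : ℝ)
    have := (h1.sub h2).sub h3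
    refine HasDerivAt.congr_deriv this ?_
    simp only [hD, inner_sub_left, real_inner_smul_left]
    rw [real_inner_comm s (fderiv ℝ g x s)]
  have hDbound : ∀ t ∈ Set.uIoc (0:ℝ) 1, ‖D t‖ ≤ L₂ / 2 * ‖s‖ ^ 3 * t ^ 2 := by
    intro t ht
    rw [Set.uIoc_of_le (by norm_num : (0:ℝ) ≤ 1)] at ht
    have ht0 : 0 ≤ t := le_of_lt ht.1
    have key := grad_taylor f L₂ hL₂ hf hLip x (t • s)
    have hts : fderiv ℝ g x (t • s) = t • (fderiv ℝ g x s) := by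
      rw [map_smul]
    rw [hts] at key
    calc ‖D t‖ ≤ ‖g (x + t • s) - g x - t • (fderiv ℝ g x s)‖ * ‖s‖ := by
          rw [hD]; exact (abs_real_inner_le_norm _ _)
      _ ≤ (L₂ / 2 * ‖t • s‖ ^ 2) * ‖s‖ := mul_le_mul_of_nonneg_right key (norm_nonneg s)
      _ = L₂ / 2 * ‖s‖ ^ 3 * t ^ 2 := by
          rw [norm_smul, Real.norm_eq_abs, abs_of_nonneg ht0]; ring
  have hDcont : Continuous D := by
    have hgc : Continuous g := hg1.continuous
    apply Continuous.inner _ continuous_const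
    apply Continuous.sub
    apply Continuous.sub
    · exact hgc.comp (by continuity)
    · exact continuous_const
    · exact (continuous_id.smul continuous_const)
  have hint : IntervalIntegrable D MeasureTheory.volume 0 1 := hDcont.intervalIntegrable 0 1
  have hftc : ∫ t in (0:ℝ)..1, D t = ψ 1 - ψ 0 :=
    intervalIntegral.integral_eq_sub_of_hasDerivAt (fun t _ => hψ' t) hint
  have hψval : ψ 1 - ψ 0 =
      f (x + s) - (f x + ⟪g x, s⟫ + (1/2) * ⟪s, fderiv ℝ g x s⟫) := by
    simp [hψ]
    ring
  have hintg : IntervalIntegrable (fun t : ℝ => L₂ / 2 * ‖s‖ ^ 3 * t ^ 2)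
      MeasureTheory.volume 0 1 := Continuous.intervalIntegrable (by continuity) 0 1
  have hnorm : ‖∫ t in (0:ℝ)..1, D t‖ ≤ |∫ t in (0:ℝ)..1, L₂ / 2 * ‖s‖ ^ 3 * t ^ 2| := by
    apply intervalIntegral.norm_integral_le_abs_of_norm_le _ hintg
    filter_upwards [MeasureTheory.ae_restrict_mem measurableSet_uIoc] with t ht
    exact hDbound t ht
  have hval : (∫ t in (0:ℝ)..1, L₂ / 2 * ‖s‖ ^ 3 * t ^ 2) = L₂ / 6 * ‖s‖ ^ 3 := by
    rw [intervalIntegral.integral_const_mul, integral_pow]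
    ring
  rw [hftc, hψval, hval] at hnorm
  calc |f (x + s) - (f x + ⟪g x, s⟫ + (1/2) * ⟪s, fderiv ℝ g x s⟫)| ≤ |L₂ / 6 * ‖s‖ ^ 3| :=
      hnorm
    _ = L₂ / 6 * ‖s‖ ^ 3 := abs_of_nonneg (by positivity)


/-- If the step `s ≠ 0` satisfies `T(0) - T(s) ≥ (1/2)σr‖s‖²` and `‖s‖ ≤ C_up r`, and
`σ ≥ L₂C_up/(3(1-η₁))`, then the iteration is successful:
`f(x) - f(x+s) ≥ η₁(T(0) - T(s))`. -/
theorem successful_iteration_regularized_newton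
    (n : ℕ) (f : EuclideanSpace ℝ (Fin n) → ℝ) (L₂ : ℝ) (hL₂ : 0 < L₂)
    (hf : ContDiff ℝ 2 f)
    (hLip : ∀ y z : EuclideanSpace ℝ (Fin n),
      ‖fderiv ℝ (gradient f) y - fderiv ℝ (gradient f) z‖ ≤ L₂ * ‖y - z‖)
    (x : EuclideanSpace ℝ (Fin n))
    (T : EuclideanSpace ℝ (Fin n) → ℝ)
    (hT : ∀ s : EuclideanSpace ℝ (Fin n),
      T s = f x + ⟪gradient f x, s⟫ + (1 / 2) * ⟪s, fderiv ℝ (gradient f) x s⟫)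
    (σ r C_up η₁ : ℝ) (hσ : 0 < σ) (hr : 0 < r) (hC : 0 < C_up)
    (hη₁ : η₁ ∈ Set.Ioo (0 : ℝ) 1)
    (s : EuclideanSpace ℝ (Fin n)) (hs : s ≠ 0)
    (hdec : T 0 - T s ≥ (1 / 2) * σ * r * ‖s‖ ^ 2)
    (hnorm : ‖s‖ ≤ C_up * r)
    (hσbig : σ ≥ L₂ * C_up / (3 * (1 - η₁))) :
    f x - f (x + s) ≥ η₁ * (T 0 - T s) := by
  obtain ⟨hη0, hη1⟩ := hη₁
  have hN : 0 < ‖s‖ := norm_pos_iff.2 hs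
  have hT0 : T 0 = f x := by simp [hT]
  have htay := fun_taylor f L₂ hL₂ hf hLip x s
  have hTs : f x + ⟪gradient f x, s⟫ + (1/2) * ⟪s, fderiv ℝ (gradient f) x s⟫ = T s :=
    (hT s).symm
  rw [hTs] at htay
  have hup : f (x + s) - T s ≤ L₂ / 6 * ‖s‖ ^ 3 := le_trans (le_abs_self _) htay
  have h1 : L₂ * C_up ≤ 3 * (1 - η₁) * σ := by
    have h3 : 0 < 3 * (1 - η₁) := by nlinarith
    rw [ge_iff_le, div_le_iff₀ h3] at hσbig
    nlinarith
  have hcube : ‖s‖ ^ 3 ≤ C_up * r * ‖s‖ ^ 2 := by nlinarith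
  nlinarith [mul_le_mul_of_nonneg_left hdec.le (by nlinarith : (0:ℝ) ≤ 1 - η₁),
    mul_le_mul_of_nonneg_left hcube (by positivity : (0:ℝ) ≤ L₂ / 6),
    mul_le_mul_of_nonneg_right h1 (mul_nonneg hr.le (sq_nonneg ‖s‖))]
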